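/- arXiv:2512.03204 — 4 statements merged into one kernel-verified Lean document; each statement's English description precedes it below -/
import Mathlib

section
/- Let P be an n×n stochastic matrix with unique stationary distribution π such that I − P + eπ' is invertible, and suppose P depends differentiably on a parameter θ with π also differentiable. Then the gradient of the average reward η := π'r satisfies ∇η = π'(∇P)(I − P + eπ')⁻¹ r, for any reward vector r ∈ ℝ^n. -/
open Matrix Finset

/-- If `P θ` is a differentiable family of row-stochastic matrices
with differentiable stationary distributions `π θ`, and `I - P + eπ'` is
invertible at `θ₀`, then the gradient of the average reward `η := π' r`
satisfies `∇η = π' (∇P) (I - P + eπ')⁻¹ r`. -/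
theorem stmt3 {n : ℕ} (P : ℝ → Matrix (Fin n) (Fin n) ℝ)
    (π : ℝ → Fin n → ℝ) (r : Fin n → ℝ) (θ₀ : ℝ)
    (hPdiff : ∀ i j, Differentiable ℝ (fun θ => P θ i j))
    (hPnonneg : ∀ θ i j, 0 ≤ P θ i j)
    (hProw : ∀ θ i, ∑ j, P θ i j = 1)
    (hπstat : ∀ θ, Matrix.vecMul (π θ) (P θ) = π θ)
    (hπnonneg : ∀ θ i, 0 ≤ π θ i)
    (hπsum : ∀ θ, ∑ i, π θ i = 1)
    (hπuniq : ∀ θ (v : Fin n → ℝ), Matrix.vecMul v (P θ) = v →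
      (∀ i, 0 ≤ v i) → ∑ i, v i = 1 → v = π θ)
    (hπdiff : ∀ i, Differentiable ℝ (fun θ => π θ i))
    (hinv : IsUnit (1 - P θ₀ + Matrix.of fun (_ : Fin n) j => π θ₀ j)) :
    deriv (fun θ => π θ ⬝ᵥ r) θ₀ =
      Matrix.vecMul (π θ₀) (Matrix.of fun i j => deriv (fun t => P t i j) θ₀) ⬝ᵥ
        ((1 - P θ₀ + Matrix.of fun (_ : Fin n) j => π θ₀ j)⁻¹).mulVec r := by
  set A : Matrix (Fin n) (Fin n) ℝ :=
    1 - P θ₀ + Matrix.of fun (_ : Fin n) j => π θ₀ j with hAdef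
  set P' : Matrix (Fin n) (Fin n) ℝ :=
    Matrix.of fun i j => deriv (fun t => P t i j) θ₀ with hP'def
  set π' : Fin n → ℝ := fun i => deriv (fun t => π t i) θ₀ with hπ'def
  have hπ'd : ∀ i, HasDerivAt (fun t => π t i) (π' i) θ₀ :=
    fun i => (hπdiff i θ₀).hasDerivAt
  have hP'd : ∀ i j, HasDerivAt (fun t => P t i j) (P' i j) θ₀ :=
    fun i j => (hPdiff i j θ₀).hasDerivAt
  -- sum of derivatives is zero
  have h1 : ∑ i, π' i = 0 := by
    have hs : HasDerivAt (fun θ => ∑ i, π θ i) (∑ i, π' i) θ₀ :=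
      HasDerivAt.fun_sum (fun i _ => hπ'd i)
    have he : (fun θ => ∑ i, π θ i) = fun _ => (1 : ℝ) := funext fun θ => hπsum θ
    rw [he] at hs
    exact hs.unique (hasDerivAt_const _ _)
  -- derivative of the stationarity equation
  have h2 : ∀ j, ∑ i, (π' i * P θ₀ i j + π θ₀ i * P' i j) = π' j := by
    intro j
    have hs : HasDerivAt (fun θ => ∑ i, π θ i * P θ i j)
        (∑ i, (π' i * P θ₀ i j + π θ₀ i * P' i j)) θ₀ :=
      HasDerivAt.fun_sum (fun i _ => (hπ'd i).mul (hP'd i j))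
    have he : (fun θ => ∑ i, π θ i * P θ i j) = fun θ => π θ j := by
      funext θ
      have := congrFun (hπstat θ) j
      simpa [Matrix.vecMul, dotProduct] using this
    rw [he] at hs
    exact hs.unique (hπ'd j)
  -- key identity: π' A = π P'
  have hA : Matrix.vecMul π' A = Matrix.vecMul (π θ₀) P' := by
    funext j
    have hsplit : ∑ i, π' i * P θ₀ i j = π' j - ∑ i, π θ₀ i * P' i j := by
      have := h2 j
      rw [Finset.sum_add_distrib] at this
      linarith
    simp only [Matrix.vecMul, dotProduct, hAdef, Matrix.add_apply, Matrix.sub_apply,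
      Matrix.one_apply, Matrix.of_apply]
    have : ∑ i, π' i * ((if i = j then (1:ℝ) else 0) - P θ₀ i j + π θ₀ j)
        = (∑ i, π' i * (if i = j then (1:ℝ) else 0)) - (∑ i, π' i * P θ₀ i j)
          + (∑ i, π' i) * π θ₀ j := by
      rw [Finset.sum_mul, ← Finset.sum_sub_distrib, ← Finset.sum_add_distrib]
      exact Finset.sum_congr rfl fun i _ => by ring
    rw [this, h1, hsplit]
    simp [mul_ite]
  have hdet : IsUnit A.det := (Matrix.isUnit_iff_isUnit_det A).mp hinv
  have hπ'eq : Matrix.vecMul (Matrix.vecMul (π θ₀) P') A⁻¹ = π' := by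
    rw [← hA, Matrix.vecMul_vecMul, Matrix.mul_nonsing_inv _ hdet, Matrix.vecMul_one]
  have hL : deriv (fun θ => π θ ⬝ᵥ r) θ₀ = π' ⬝ᵥ r := by
    have hs : HasDerivAt (fun θ => ∑ i, π θ i * r i) (∑ i, π' i * r i) θ₀ :=
      HasDerivAt.fun_sum (fun i _ => (hπ'd i).mul_const (r i))
    have : deriv (fun θ => ∑ i, π θ i * r i) θ₀ = ∑ i, π' i * r i := hs.deriv
    simpa [dotProduct] using this
  rw [hL, Matrix.dotProduct_mulVec, hπ'eq]
end

section
/- Let P(θ) be a differentiable family of stochastic matrices with unique stationary distribution π(θ), differentiable in θ, and reward vector r. Define J_β := (I − βP)⁻¹ r and η := π'r. Then lim_{β→1⁻} π'(∇P) J_β = ∇η. -/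
open Matrix Finset

/-- For a differentiable family of row-stochastic matrices `P θ`
with differentiable stationary distributions `π θ` and `I - P + eπ'`
invertible at `θ₀`, the discounted approximation `π' (∇P) J_β` with
`J_β := (I - βP)⁻¹ r` converges, as `β → 1⁻`, to the gradient `∇η` of the
average reward `η := π' r`. -/
theorem stmt9 {n : ℕ} (P : ℝ → Matrix (Fin n) (Fin n) ℝ)
    (π : ℝ → Fin n → ℝ) (r : Fin n → ℝ) (θ₀ : ℝ)
    (hPdiff : ∀ i j, Differentiable ℝ (fun θ => P θ i j))
    (hPnonneg : ∀ θ i j, 0 ≤ P θ i j)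
    (hProw : ∀ θ i, ∑ j, P θ i j = 1)
    (hπstat : ∀ θ, Matrix.vecMul (π θ) (P θ) = π θ)
    (hπnonneg : ∀ θ i, 0 ≤ π θ i)
    (hπsum : ∀ θ, ∑ i, π θ i = 1)
    (hπuniq : ∀ θ (v : Fin n → ℝ), Matrix.vecMul v (P θ) = v →
      (∀ i, 0 ≤ v i) → ∑ i, v i = 1 → v = π θ)
    (hπdiff : ∀ i, Differentiable ℝ (fun θ => π θ i))
    (hsimple : ∀ x : Fin n → ℝ, (P θ₀).mulVec x = x → ∃ c : ℝ, x = fun _ => c)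
    (hspec : ∀ μ ∈ spectrum ℂ ((P θ₀).map (Complex.ofReal)), μ = 1 ∨ ‖μ‖ < 1)
    (hinv : IsUnit (1 - P θ₀ + Matrix.of fun (_ : Fin n) j => π θ₀ j)) :
    Filter.Tendsto
      (fun β : ℝ =>
        Matrix.vecMul (π θ₀) (Matrix.of fun i j => deriv (fun t => P t i j) θ₀) ⬝ᵥ
          ((1 - β • P θ₀)⁻¹).mulVec r)
      (nhdsWithin 1 (Set.Iio 1))
      (nhds (deriv (fun θ => π θ ⬝ᵥ r) θ₀)) := by
  classical
  rcases Nat.eq_zero_or_pos n with hn | hn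
  · subst hn
    exact absurd (hπsum θ₀) (by simp)
  have hne : Nonempty (Fin n) := ⟨⟨0, hn⟩⟩
  set P0 : Matrix (Fin n) (Fin n) ℝ := P θ₀ with hP0
  set q : Fin n → ℝ := fun i => deriv (fun t => π t i) θ₀ with hq
  set Q : Matrix (Fin n) (Fin n) ℝ := Matrix.of fun i j => deriv (fun t => P t i j) θ₀ with hQ
  set E : Matrix (Fin n) (Fin n) ℝ := Matrix.of fun (_ : Fin n) j => π θ₀ j with hE
  set B : Matrix (Fin n) (Fin n) ℝ := P0 - E with hB
  set A : Matrix (Fin n) (Fin n) ℝ := 1 - P0 + E with hA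
  have hAB : A = 1 - B := by rw [hA, hB]; abel
  -- sum of q is zero
  have hqsum : ∑ i, q i = 0 := by
    have h1 : HasDerivAt (fun θ => ∑ i, π θ i) (∑ i, q i) θ₀ :=
      HasDerivAt.fun_sum fun i _ => ((hπdiff i) θ₀).hasDerivAt
    have h2 : (fun θ => ∑ i, π θ i) = fun _ => (1:ℝ) := funext fun θ => hπsum θ
    rw [h2] at h1
    exact h1.unique (hasDerivAt_const _ _)
  -- differentiate stationarity
  have hstat : ∀ j, q j = ∑ i, (q i * P0 i j + π θ₀ i * Q i j) := by
    intro j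
    have h1 : HasDerivAt (fun θ => ∑ i, π θ i * P θ i j)
        (∑ i, (q i * P0 i j + π θ₀ i * Q i j)) θ₀ := by
      refine HasDerivAt.fun_sum fun i _ => ?_
      exact ((hπdiff i) θ₀).hasDerivAt.mul ((hPdiff i j) θ₀).hasDerivAt
    have h2 : (fun θ => ∑ i, π θ i * P θ i j) = fun θ => π θ j := by
      funext θ
      have := congrFun (hπstat θ) j
      simpa [Matrix.vecMul, dotProduct] using this
    rw [h2] at h1
    exact (h1.unique ((hπdiff j) θ₀).hasDerivAt).symm ▸ rfl
  -- w = π' ∇P = q' (I - P)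
  set w : Fin n → ℝ := Matrix.vecMul (π θ₀) Q with hw
  have hwq : w = Matrix.vecMul q (1 - P0) := by
    funext j
    have h1 : Matrix.vecMul q (1 - P0) j = q j - ∑ i, q i * P0 i j := by
      simp only [Matrix.vecMul, dotProduct, Matrix.sub_apply, Matrix.one_apply,
        mul_sub, Finset.sum_sub_distrib, mul_ite, mul_one, mul_zero, Finset.sum_ite_eq',
        Finset.mem_univ, if_true]
    have h2 : w j = ∑ i, π θ₀ i * Q i j := by
      simp [hw, Matrix.vecMul, dotProduct]
    rw [h1, h2]
    have := hstat j
    rw [Finset.sum_add_distrib] at this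
    linarith
  -- q E = 0
  have hqE : Matrix.vecMul q E = 0 := by
    funext j
    simp only [Matrix.vecMul, dotProduct, hE, Matrix.of_apply, Pi.zero_apply]
    rw [← Finset.sum_mul, hqsum, zero_mul]
  -- w ⬝ e = 0
  have hwsum : ∑ j, w j = 0 := by
    rw [hwq]
    have : ∀ j, Matrix.vecMul q (1 - P0) j = q j - ∑ i, q i * P0 i j := by
      intro j
      simp only [Matrix.vecMul, dotProduct, Matrix.sub_apply, Matrix.one_apply,
        mul_sub, Finset.sum_sub_distrib, mul_ite, mul_one, mul_zero, Finset.sum_ite_eq',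
        Finset.mem_univ, if_true]
    simp only [this, Finset.sum_sub_distrib, hqsum]
    rw [Finset.sum_comm]
    simp only [← Finset.mul_sum, hP0, hProw θ₀, mul_one, hqsum, sub_zero]
  have hdetA : A.det ≠ 0 := by
    have := (Matrix.isUnit_iff_isUnit_det A).1 hinv
    exact isUnit_iff_ne_zero.1 this
  -- invertibility of 1 - β P for 0 < β < 1
  have hdetP : ∀ β : ℝ, 0 < β → β < 1 → (1 - β • P0).det ≠ 0 := by
    intro β hβ0 hβ1 hdet0
    obtain ⟨v, hvne, hv⟩ := Matrix.exists_mulVec_eq_zero_iff.2 hdet0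
    have hv0 : ∀ i, v i = β * ∑ j, P0 i j * v j := by
      intro i
      have h := congrFun hv i
      simp only [Matrix.mulVec, dotProduct, Matrix.sub_apply, Matrix.smul_apply,
        Matrix.one_apply, sub_mul, Finset.sum_sub_distrib, ite_mul, one_mul, zero_mul,
        Finset.sum_ite_eq, Finset.mem_univ, if_true, smul_eq_mul, mul_assoc,
        ← Finset.mul_sum, Pi.zero_apply] at h
      linarith
    obtain ⟨i₀, -, hmax⟩ := Finset.exists_max_image Finset.univ (fun i => |v i|)
      Finset.univ_nonempty
    have key : |v i₀| ≤ β * |v i₀| := by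
      calc |v i₀| = β * |∑ j, P0 i₀ j * v j| := by
            rw [hv0 i₀, abs_mul, abs_of_pos hβ0]
        _ ≤ β * ∑ j, P0 i₀ j * |v i₀| := by
            refine mul_le_mul_of_nonneg_left ?_ hβ0.le
            calc |∑ j, P0 i₀ j * v j| ≤ ∑ j, |P0 i₀ j * v j| :=
                  Finset.abs_sum_le_sum_abs _ _
              _ = ∑ j, P0 i₀ j * |v j| := by
                  refine Finset.sum_congr rfl fun j _ => ?_
                  rw [abs_mul, abs_of_nonneg (hPnonneg θ₀ i₀ j)]
              _ ≤ ∑ j, P0 i₀ j * |v i₀| :=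
                  Finset.sum_le_sum fun j _ =>
                    mul_le_mul_of_nonneg_left (hmax j (Finset.mem_univ _))
                      (hPnonneg θ₀ i₀ j)
        _ = β * |v i₀| := by rw [← Finset.sum_mul, hProw θ₀ i₀, one_mul]
    have habs : |v i₀| ≤ 0 := by nlinarith [abs_nonneg (v i₀)]
    refine hvne (funext fun i => ?_)
    have := (hmax i (Finset.mem_univ _)).trans habs
    simpa using abs_nonpos_iff.1 (le_trans ((hmax i (Finset.mem_univ _))) habs)
  -- ones vector facts
  have hPone : P0 *ᵥ (fun _ => (1:ℝ)) = fun _ => (1:ℝ) := by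
    funext i; simp [Matrix.mulVec, dotProduct, hP0, hProw θ₀ i]
  have hEone : E *ᵥ (fun _ => (1:ℝ)) = fun _ => (1:ℝ) := by
    funext i; simp [Matrix.mulVec, dotProduct, hE, hπsum θ₀]
  have hBone : B *ᵥ (fun _ => (1:ℝ)) = 0 := by
    rw [hB, Matrix.sub_mulVec, hPone, hEone]; simp
  -- key identity for each good β
  have hkey : ∀ β : ℝ, 0 < β → β < 1 → (1 - β • B).det ≠ 0 →
      w ⬝ᵥ (1 - β • P0)⁻¹ *ᵥ r = w ⬝ᵥ (1 - β • B)⁻¹ *ᵥ r := by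
    intro β hβ0 hβ1 hbd
    have hBu : IsUnit (1 - β • B).det := isUnit_iff_ne_zero.2 hbd
    have hPu : IsUnit (1 - β • P0).det := isUnit_iff_ne_zero.2 (hdetP β hβ0 hβ1)
    have hMone : (1 - β • B) *ᵥ (fun _ => (1:ℝ)) = fun _ => (1:ℝ) := by
      rw [Matrix.sub_mulVec, Matrix.smul_mulVec, hBone]
      simp
    have hMinvone : (1 - β • B)⁻¹ *ᵥ (fun _ => (1:ℝ)) = fun _ => (1:ℝ) := by
      conv_lhs => rw [← hMone]
      rw [Matrix.mulVec_mulVec, Matrix.nonsing_inv_mul _ hBu, Matrix.one_mulVec]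
    set u : Fin n → ℝ := Matrix.vecMul w (1 - β • B)⁻¹ with hu
    have husum : ∑ i, u i = 0 := by
      have h1 : u ⬝ᵥ (fun _ => (1:ℝ)) = w ⬝ᵥ ((1 - β • B)⁻¹ *ᵥ (fun _ => (1:ℝ))) := by
        rw [Matrix.dotProduct_mulVec, hu]
      rw [hMinvone] at h1
      have h2 : u ⬝ᵥ (fun _ => (1:ℝ)) = ∑ i, u i := by simp [dotProduct]
      have h3 : w ⬝ᵥ (fun _ => (1:ℝ)) = ∑ i, w i := by simp [dotProduct]
      rw [h2, h3] at h1
      rw [h1, hwsum]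
    have huE : Matrix.vecMul u E = 0 := by
      funext j
      simp only [Matrix.vecMul, dotProduct, hE, Matrix.of_apply, Pi.zero_apply]
      rw [← Finset.sum_mul, husum, zero_mul]
    have hsplit : (1 : Matrix (Fin n) (Fin n) ℝ) - β • P0 = (1 - β • B) - β • E := by
      rw [hB, smul_sub]; abel
    have huβE : Matrix.vecMul u (β • E) = 0 := by
      funext j
      simp only [Matrix.vecMul, dotProduct, Matrix.smul_apply, hE, Matrix.of_apply,
        smul_eq_mul, Pi.zero_apply]
      rw [← Finset.sum_mul, husum, zero_mul]
    have huP : Matrix.vecMul u (1 - β • P0) = w := by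
      rw [hsplit, Matrix.vecMul_sub, huβE, sub_zero, hu,
        Matrix.vecMul_vecMul, Matrix.nonsing_inv_mul _ hBu, Matrix.vecMul_one]
    have hwP : Matrix.vecMul w (1 - β • P0)⁻¹ = u := by
      conv_lhs => rw [← huP]
      rw [Matrix.vecMul_vecMul, Matrix.mul_nonsing_inv _ hPu, Matrix.vecMul_one]
    rw [Matrix.dotProduct_mulVec, hwP, hu, ← Matrix.dotProduct_mulVec]
  -- value of the limit
  have hqA : Matrix.vecMul q A = w := by
    rw [hA, Matrix.vecMul_add, hqE, add_zero, ← hwq]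
  have hwA : Matrix.vecMul w A⁻¹ = q := by
    conv_lhs => rw [← hqA]
    rw [Matrix.vecMul_vecMul, Matrix.mul_nonsing_inv _ (isUnit_iff_ne_zero.2 hdetA),
      Matrix.vecMul_one]
  have hval : w ⬝ᵥ A⁻¹ *ᵥ r = q ⬝ᵥ r := by
    rw [Matrix.dotProduct_mulVec, hwA]
  -- derivative of average reward
  have hderiv : deriv (fun θ => π θ ⬝ᵥ r) θ₀ = q ⬝ᵥ r := by
    have h1 : HasDerivAt (fun θ => ∑ i, π θ i * r i) (∑ i, q i * r i) θ₀ :=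
      HasDerivAt.fun_sum fun i _ => ((hπdiff i) θ₀).hasDerivAt.mul_const (r i)
    have h2 : (fun θ => π θ ⬝ᵥ r) = fun θ => ∑ i, π θ i * r i := by
      funext θ; simp [dotProduct]
    rw [h2]
    rw [h1.deriv]
    simp [dotProduct]
  -- continuity
  have hcontM : Continuous (fun β : ℝ => (1 : Matrix (Fin n) (Fin n) ℝ) - β • B) :=
    continuous_const.sub (continuous_id.smul continuous_const)
  have hcontdet : Continuous (fun β : ℝ => (1 - β • B).det) := hcontM.matrix_det
  have hdet1 : (1 - (1:ℝ) • B).det ≠ 0 := by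
    rw [one_smul, ← hAB]; exact hdetA
  have hcontinv : ContinuousAt (fun β : ℝ => (1 - β • B)⁻¹) 1 := by
    have h1 : (fun β : ℝ => (1 - β • B)⁻¹) =
        fun β => ((1 - β • B).det)⁻¹ • (1 - β • B).adjugate := by
      funext β
      rw [Matrix.inv_def, Ring.inverse_eq_inv']
    rw [h1]
    exact (hcontdet.continuousAt.inv₀ hdet1).smul hcontM.matrix_adjugate.continuousAt
  have hcontg : ContinuousAt (fun β : ℝ => w ⬝ᵥ (1 - β • B)⁻¹ *ᵥ r) 1 := by
    have hout : Continuous (fun M : Matrix (Fin n) (Fin n) ℝ => w ⬝ᵥ M *ᵥ r) :=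
      continuous_const.dotProduct (continuous_id.matrix_mulVec continuous_const)
    exact hout.continuousAt.comp hcontinv
  have hg1 : (fun β : ℝ => w ⬝ᵥ (1 - β • B)⁻¹ *ᵥ r) 1 = q ⬝ᵥ r := by
    simp only [one_smul, ← hAB]
    exact hval
  have htend : Filter.Tendsto (fun β : ℝ => w ⬝ᵥ (1 - β • B)⁻¹ *ᵥ r)
      (nhdsWithin 1 (Set.Iio 1)) (nhds (q ⬝ᵥ r)) := by
    have h := hcontg.tendsto
    rw [show w ⬝ᵥ (1 - (1:ℝ) • B)⁻¹ *ᵥ r = q ⬝ᵥ r from hg1] at h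
    exact h.mono_left nhdsWithin_le_nhds
  rw [hderiv]
  refine htend.congr' ?_
  have e1 : ∀ᶠ β in nhdsWithin (1:ℝ) (Set.Iio 1), (0:ℝ) < β :=
    (eventually_gt_nhds (by norm_num : (0:ℝ) < 1)).filter_mono nhdsWithin_le_nhds
  have e2 : ∀ᶠ β in nhdsWithin (1:ℝ) (Set.Iio 1), β < 1 :=
    eventually_mem_nhdsWithin.mono fun β h => h
  have e3 : ∀ᶠ β in nhdsWithin (1:ℝ) (Set.Iio 1), (1 - β • B).det ≠ 0 :=
    (hcontdet.continuousAt.eventually_ne hdet1).filter_mono nhdsWithin_le_nhds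
  filter_upwards [e1, e2, e3] with β h1 h2 h3
  exact (hkey β h1 h2 h3).symm
end

section
/- For β ∈ [0,1), the bias identity π'(∇P)J_β − ∇η = π'(∇P)[(I − βP)⁻¹ − (I − P + eπ')⁻¹] r holds, and using (∇P)e = 0 the difference can be written as π'(∇P)(Σ_{n=0}^∞ (β^n − 1)(P^n − eπ'))r. -/
open Matrix Finset

section AuxStmt10

open Filter Topology

private lemma aux_sum_mat {n : ℕ} (u : ℕ → Matrix (Fin n) (Fin n) ℝ) (b : ℕ → ℝ)
    (hb : Summable b) (h : ∀ k i j, |u k i j| ≤ b k) : Summable u := by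
  refine (Pi.summable.2 fun i => Pi.summable.2 fun j => ?_ : Summable (fun k => (u k : Fin n → Fin n → ℝ)))
  exact Summable.of_norm_bounded hb fun k => by
    simpa [Real.norm_eq_abs] using h k i j

private lemma aux_tend_mat {n : ℕ} (u : ℕ → Matrix (Fin n) (Fin n) ℝ) (b : ℕ → ℝ)
    (hb : Tendsto b atTop (𝓝 0)) (h : ∀ k i j, |u k i j| ≤ b k) :
    Tendsto u atTop (𝓝 0) := by
  refine (tendsto_pi_nhds.2 fun i => tendsto_pi_nhds.2 fun j => ?_ : Tendsto (fun k => (u k : Fin n → Fin n → ℝ)) atTop (𝓝 (0 : Fin n → Fin n → ℝ)))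
  exact squeeze_zero_norm (fun k => by simpa [Real.norm_eq_abs] using h k i j) hb

private lemma aux_inv {n : ℕ} (M : Matrix (Fin n) (Fin n) ℝ)
    (hsum : Summable fun k => M ^ k)
    (h0 : Tendsto (fun k => M ^ k) atTop (𝓝 0)) :
    (1 - M)⁻¹ = ∑' k, M ^ k := by
  apply Matrix.inv_eq_right_inv
  have h1 : Tendsto (fun N => (1 - M) * ∑ k ∈ Finset.range N, M ^ k) atTop
      (𝓝 ((1 - M) * ∑' k, M ^ k)) := (hsum.hasSum.tendsto_sum_nat).const_mul _
  have h2 : Tendsto (fun N => (1 - M) * ∑ k ∈ Finset.range N, M ^ k) atTop (𝓝 1) := by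
    have heq : ∀ N, (1 - M) * ∑ k ∈ Finset.range N, M ^ k = 1 - M ^ N := by
      intro N
      calc (1 - M) * ∑ k ∈ Finset.range N, M ^ k
          = -((M - 1) * ∑ k ∈ Finset.range N, M ^ k) := by rw [← neg_sub, neg_mul]
        _ = -(M ^ N - 1) := by rw [mul_geom_sum]
        _ = 1 - M ^ N := by rw [neg_sub]
    simp only [heq]
    simpa using tendsto_const_nhds.sub h0
  exact tendsto_nhds_unique h1 h2

end AuxStmt10

open Filter Topology

/-- Bias identity. With `J_β := (I - βP)⁻¹ r` and
`∇η := π'(∇P)(I - P + eπ')⁻¹ r`, we have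
`π'(∇P)J_β - ∇η = π'(∇P)[(I - βP)⁻¹ - (I - P + eπ')⁻¹] r`, and using
`(∇P)e = 0` this difference equals `π'(∇P)(Σ_{n≥0} (β^n - 1)(P^n - eπ')) r`. -/
theorem stmt10 {n : ℕ} (P : ℝ → Matrix (Fin n) (Fin n) ℝ)
    (π : Fin n → ℝ) (r : Fin n → ℝ) (θ₀ : ℝ) (β C ρ : ℝ)
    (hPdiff : ∀ i j, Differentiable ℝ (fun θ => P θ i j))
    (hPnonneg : ∀ θ i j, 0 ≤ P θ i j)
    (hProw : ∀ θ i, ∑ j, P θ i j = 1)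
    (hπstat : Matrix.vecMul π (P θ₀) = π)
    (hπnonneg : ∀ i, 0 ≤ π i)
    (hπsum : ∑ i, π i = 1)
    (hβ0 : 0 ≤ β) (hβ1 : β < 1)
    (hC : 0 < C) (hρ0 : 0 < ρ) (hρ1 : ρ < 1)
    (hmix : ∀ (N : ℕ) (i j : Fin n),
      |((P θ₀ ^ N) - Matrix.of fun (_ : Fin n) j => π j) i j| ≤ C * ρ ^ N) :
    (Matrix.vecMul π (Matrix.of fun i j => deriv (fun t => P t i j) θ₀) ⬝ᵥ
          ((1 - β • P θ₀)⁻¹).mulVec r) -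
        (Matrix.vecMul π (Matrix.of fun i j => deriv (fun t => P t i j) θ₀) ⬝ᵥ
          ((1 - P θ₀ + Matrix.of fun (_ : Fin n) j => π j)⁻¹).mulVec r) =
      Matrix.vecMul π (Matrix.of fun i j => deriv (fun t => P t i j) θ₀) ⬝ᵥ
        (((1 - β • P θ₀)⁻¹ -
          (1 - P θ₀ + Matrix.of fun (_ : Fin n) j => π j)⁻¹).mulVec r) ∧
    (Matrix.vecMul π (Matrix.of fun i j => deriv (fun t => P t i j) θ₀) ⬝ᵥ
          ((1 - β • P θ₀)⁻¹).mulVec r) -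
        (Matrix.vecMul π (Matrix.of fun i j => deriv (fun t => P t i j) θ₀) ⬝ᵥ
          ((1 - P θ₀ + Matrix.of fun (_ : Fin n) j => π j)⁻¹).mulVec r) =
      Matrix.vecMul π (Matrix.of fun i j => deriv (fun t => P t i j) θ₀) ⬝ᵥ
        (∑' k : ℕ, (β ^ k - 1) •
          ((P θ₀ ^ k) - Matrix.of fun (_ : Fin n) j => π j).mulVec r) := by
  classical
  constructor
  · rw [Matrix.sub_mulVec, dotProduct_sub]
  set A := P θ₀ with hA
  set Pi' : Matrix (Fin n) (Fin n) ℝ := Matrix.of (fun (_ : Fin n) j => π j) with hPi'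
  set D : Matrix (Fin n) (Fin n) ℝ :=
    Matrix.of (fun i j => deriv (fun t => P t i j) θ₀) with hD
  set v := Matrix.vecMul π D with hv
  have hPiconst : ∀ i j : Fin n, Pi' i j = π j := fun i j => rfl
  have hπle : ∀ j, π j ≤ 1 := fun j =>
    hπsum ▸ Finset.single_le_sum (fun i _ => hπnonneg i) (Finset.mem_univ j)
  have hDrow : ∀ i, ∑ j, deriv (fun t => P t i j) θ₀ = 0 := by
    intro i
    have h1 : deriv (fun θ => ∑ j, P θ i j) θ₀ = ∑ j, deriv (fun t => P t i j) θ₀ :=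
      deriv_fun_sum (fun j _ => (hPdiff i j).differentiableAt)
    rw [← h1]
    have h2 : (fun θ => ∑ j, P θ i j) = fun _ => (1:ℝ) := funext fun θ => hProw θ i
    rw [h2, deriv_const]
  have hvsum : ∑ j, v j = 0 := by
    simp only [hv, hD, Matrix.vecMul, dotProduct, Matrix.of_apply]
    rw [Finset.sum_comm]
    simp [← Finset.mul_sum, hDrow]
  -- structural matrix identities
  have hAPi : A * Pi' = Pi' := by
    ext i j
    simp [Matrix.mul_apply, hPi', ← Finset.sum_mul, hA, hProw θ₀ i]
  have hPiA : Pi' * A = Pi' := by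
    ext i j
    simpa [Matrix.mul_apply, hPi', Matrix.vecMul, dotProduct] using congrFun hπstat j
  have hPiPi : Pi' * Pi' = Pi' := by
    ext i j
    simp [Matrix.mul_apply, hPi', ← Finset.sum_mul, hπsum]
  have hApowPi : ∀ k, A ^ k * Pi' = Pi' := by
    intro k; induction k with
    | zero => simp
    | succ k ih => rw [pow_succ, mul_assoc, hAPi, ih]
  have hpow : ∀ k, (A - Pi') ^ (k + 1) = A ^ (k + 1) - Pi' := by
    intro k; induction k with
    | zero => simp
    | succ k ih =>
      rw [pow_succ, ih, sub_mul, mul_sub, mul_sub, hApowPi, hPiA, hPiPi, ← pow_succ]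
      abel
  -- entrywise bounds
  have hE : ∀ (k : ℕ) (i j : Fin n), |(A ^ k) i j| ≤ C + 1 := by
    intro k i j
    have h1 := hmix k i j
    have h2 : (A ^ k) i j = (A ^ k - Pi') i j + π j := by simp [Matrix.sub_apply, hPi']
    have h3 : ρ ^ k ≤ 1 := pow_le_one₀ hρ0.le hρ1.le
    have h4 : |π j| ≤ 1 := abs_le.2 ⟨by linarith [hπnonneg j], hπle j⟩
    calc |(A ^ k) i j| ≤ |(A ^ k - Pi') i j| + |π j| := h2 ▸ abs_add_le _ _
      _ ≤ C * ρ ^ k + 1 := add_le_add h1 h4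
      _ ≤ C + 1 := by nlinarith
  have hb1 : ∀ (k : ℕ) (i j : Fin n), |((β • A) ^ k) i j| ≤ (C + 1) * β ^ k := by
    intro k i j
    have h0 : ((β • A) ^ k) i j = β ^ k * (A ^ k) i j := by
      rw [smul_pow]; simp
    rw [h0, abs_mul, abs_of_nonneg (pow_nonneg hβ0 k)]
    calc β ^ k * |(A ^ k) i j| ≤ β ^ k * (C + 1) :=
          mul_le_mul_of_nonneg_left (hE k i j) (pow_nonneg hβ0 k)
      _ = (C + 1) * β ^ k := mul_comm _ _
  have hb2 : ∀ (k : ℕ) (i j : Fin n), |((A - Pi') ^ k) i j| ≤ (C + 1) * ρ ^ k := by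
    intro k i j
    cases k with
    | zero =>
      simp only [pow_zero]
      have h5 : |(1 : Matrix (Fin n) (Fin n) ℝ) i j| ≤ 1 := by
        rw [Matrix.one_apply]
        split <;> simp
      nlinarith
    | succ k =>
      rw [hpow k]
      calc |((A ^ (k+1)) - Pi') i j| ≤ C * ρ ^ (k+1) := hmix (k+1) i j
        _ ≤ (C + 1) * ρ ^ (k+1) := by
            have := pow_nonneg hρ0.le (k+1); nlinarith
  have hbT : ∀ (k : ℕ) (i j : Fin n),
      |((β ^ k - 1) • (A ^ k - Pi')) i j| ≤ C * ρ ^ k := by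
    intro k i j
    have h1 : |β ^ k - 1| ≤ 1 := by
      have h2 : β ^ k ≤ 1 := pow_le_one₀ hβ0 hβ1.le
      have h3 : 0 ≤ β ^ k := pow_nonneg hβ0 k
      rw [abs_le]; constructor <;> linarith
    have h0 : ((β ^ k - 1) • (A ^ k - Pi')) i j = (β ^ k - 1) * (A ^ k - Pi') i j := by simp
    rw [h0, abs_mul]
    calc |β ^ k - 1| * |(A ^ k - Pi') i j| ≤ 1 * (C * ρ ^ k) :=
          mul_le_mul h1 (hmix k i j) (abs_nonneg _) zero_le_one
      _ = C * ρ ^ k := one_mul _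
  -- summability and limits
  have hsum1 : Summable (fun k => (β • A) ^ k) :=
    aux_sum_mat _ _ ((summable_geometric_of_lt_one hβ0 hβ1).mul_left (C+1)) hb1
  have htend1 : Tendsto (fun k => (β • A) ^ k) atTop (𝓝 0) :=
    aux_tend_mat _ ((C+1) * β ^ ·)
      (by simpa using (tendsto_pow_atTop_nhds_zero_of_lt_one hβ0 hβ1).const_mul (C+1)) hb1
  have hsum2 : Summable (fun k => (A - Pi') ^ k) :=
    aux_sum_mat _ _ ((summable_geometric_of_lt_one hρ0.le hρ1).mul_left (C+1)) hb2
  have htend2 : Tendsto (fun k => (A - Pi') ^ k) atTop (𝓝 0) :=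
    aux_tend_mat _ ((C+1) * ρ ^ ·)
      (by simpa using (tendsto_pow_atTop_nhds_zero_of_lt_one hρ0.le hρ1).const_mul (C+1)) hb2
  have hsumT : Summable (fun k => (β ^ k - 1) • (A ^ k - Pi')) :=
    aux_sum_mat _ _ ((summable_geometric_of_lt_one hρ0.le hρ1).mul_left C) hbT
  -- continuous additive homs
  have hΦc : Continuous (fun M : Matrix (Fin n) (Fin n) ℝ => M.mulVec r) := by
    unfold Matrix.mulVec dotProduct
    exact continuous_pi fun i => continuous_finset_sum _ fun j _ =>
      ((continuous_apply_apply i j).comp continuous_id).mul continuous_const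
  have hψc : Continuous (fun u : Fin n → ℝ => v ⬝ᵥ u) := by
    unfold dotProduct
    exact continuous_finset_sum _ fun j _ => continuous_const.mul (continuous_apply j)
  let Φ : Matrix (Fin n) (Fin n) ℝ →+ (Fin n → ℝ) :=
    { toFun := fun M => M.mulVec r
      map_zero' := by simp
      map_add' := fun M N => Matrix.add_mulVec M N r }
  let ψ : (Fin n → ℝ) →+ ℝ :=
    { toFun := fun u => v ⬝ᵥ u
      map_zero' := by simp
      map_add' := fun a b => dotProduct_add v a b }
  let F : Matrix (Fin n) (Fin n) ℝ →+ ℝ := ψ.comp Φ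
  have hFc : Continuous F := hψc.comp hΦc
  have hFdef : ∀ M : Matrix (Fin n) (Fin n) ℝ, F M = v ⬝ᵥ M.mulVec r := fun _ => rfl
  -- F kills Pi'
  have hfPi : v ⬝ᵥ Pi'.mulVec r = 0 := by
    have h1 : Pi'.mulVec r = fun _ => ∑ j, π j * r j := by
      funext i
      simp only [Matrix.mulVec, dotProduct]
      exact Finset.sum_congr rfl fun j _ => by rw [hPiconst i j]
    rw [h1]
    simp only [dotProduct]
    rw [← Finset.sum_mul, hvsum, zero_mul]
  -- inverses as geometric series
  have hX : (1 - β • A)⁻¹ = ∑' k, (β • A) ^ k := aux_inv _ hsum1 htend1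
  have hY : (1 - A + Pi')⁻¹ = ∑' k, (A - Pi') ^ k := by
    have h1 : (1 : Matrix (Fin n) (Fin n) ℝ) - A + Pi' = 1 - (A - Pi') := by abel
    rw [h1]; exact aux_inv _ hsum2 htend2
  -- HasSum statements mapped through F
  have hf1 : HasSum (fun k => F ((β • A) ^ k)) (F (∑' k, (β • A) ^ k)) := by
    exact hsum1.hasSum.map F hFc
  have hf2 : HasSum (fun k => F ((A - Pi') ^ k)) (F (∑' k, (A - Pi') ^ k)) := by
    exact hsum2.hasSum.map F hFc
  have hT : HasSum (fun k => (β ^ k - 1) • (A ^ k - Pi'))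
      (∑' k, (β ^ k - 1) • (A ^ k - Pi')) := hsumT.hasSum
  have hfT : HasSum (fun k => F ((β ^ k - 1) • (A ^ k - Pi')))
      (F (∑' k, (β ^ k - 1) • (A ^ k - Pi'))) := by
    exact hT.map F hFc
  -- RHS: pull the tsum of vectors back to the tsum of matrices
  have hw : (∑' k : ℕ, (β ^ k - 1) • ((A ^ k - Pi').mulVec r))
      = Φ (∑' k, (β ^ k - 1) • (A ^ k - Pi')) := by
    have h1 : HasSum (fun k => Φ ((β ^ k - 1) • (A ^ k - Pi')))
        (Φ (∑' k, (β ^ k - 1) • (A ^ k - Pi'))) := by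
      exact hT.map Φ hΦc
    have h2 : (fun k : ℕ => (β ^ k - 1) • ((A ^ k - Pi').mulVec r))
        = fun k => Φ ((β ^ k - 1) • (A ^ k - Pi')) := by
      funext k
      show _ = ((β ^ k - 1) • (A ^ k - Pi')).mulVec r
      rw [Matrix.smul_mulVec]
    rw [h2, h1.tsum_eq]
  -- per-term values
  have hgA : ∀ k : ℕ, v ⬝ᵥ (A ^ k).mulVec r = v ⬝ᵥ ((A ^ k - Pi').mulVec r) := by
    intro k
    rw [Matrix.sub_mulVec, dotProduct_sub, hfPi, sub_zero]
  have hterm1 : ∀ k : ℕ, F ((β • A) ^ k) = β ^ k * (v ⬝ᵥ ((A ^ k - Pi').mulVec r)) := by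
    intro k
    rw [hFdef, smul_pow, Matrix.smul_mulVec, dotProduct_smul, smul_eq_mul, hgA]
  have hterm2 : ∀ k : ℕ, F ((A - Pi') ^ k) = v ⬝ᵥ ((A ^ k - Pi').mulVec r) := by
    intro k
    cases k with
    | zero => simp [hFdef, Matrix.sub_mulVec, dotProduct_sub, hfPi, Matrix.one_mulVec]
    | succ k => rw [hFdef, hpow k]
  have htermT : ∀ k : ℕ, F ((β ^ k - 1) • (A ^ k - Pi'))
      = (β ^ k - 1) * (v ⬝ᵥ ((A ^ k - Pi').mulVec r)) := by
    intro k
    rw [hFdef, Matrix.smul_mulVec, dotProduct_smul, smul_eq_mul]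
  -- finish
  rw [hX, hY, hw]
  have hrhs : v ⬝ᵥ Φ (∑' k, (β ^ k - 1) • (A ^ k - Pi'))
      = F (∑' k, (β ^ k - 1) • (A ^ k - Pi')) := rfl
  rw [hrhs, ← hFdef, ← hFdef]
  rw [← hf1.tsum_eq, ← hf2.tsum_eq, ← hfT.tsum_eq]
  rw [← Summable.tsum_sub hf1.summable hf2.summable]
  apply tsum_congr
  intro k
  rw [hterm1, hterm2, htermT]
  ring
end

section
/- Zero-gradient theorem for finite state controllers: suppose the internal-state transition distribution satisfies ω(h|φ,g,y) = ω(h|φ,g',y) for all g, g', h, y (i.e., ω is independent of the current internal state g), and the action distribution satisfies μ(u|θ,h,y) = μ(u|θ,h',y) for all h, h', y, u (i.e., μ is independent of the internal state). Then the gradient of the long-term average reward with respect to the internal-state parameters φ is zero: ∇^φ η = 0. -/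
open Matrix Finset

/-- Zero-gradient theorem for finite state controllers. Let
`P φ` be the joint world/internal-state chain of a finite state controller
whose I-state transition `ω` depends on a real parameter `φ`, with (unique)
stationary distribution `π φ` and average reward
`η φ := Σ_{i,g} π_{i,g}(φ) r(i)`. If at `φ₀` the I-state transition
distribution is independent of the current I-state,
`ω(h|φ₀,g,y) = ω(h|φ₀,g',y)`, and the action distribution is independent of
the I-state, `μ(u|h,y) = μ(u|h',y)`, then `∇^φ η = 0` at `φ₀`. -/
theorem stmt12 {S G Y U : Type*} [Fintype S] [Fintype G] [Fintype Y] [Fintype U]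
    (ν : S → Y → ℝ) (ω : ℝ → G → Y → G → ℝ) (μ : G → Y → U → ℝ)
    (q : S → U → S → ℝ) (r : S → ℝ) (π : ℝ → S × G → ℝ) (φ₀ : ℝ)
    (hν0 : ∀ i y, 0 ≤ ν i y) (hν1 : ∀ i, ∑ y, ν i y = 1)
    (hω0 : ∀ φ g y h, 0 ≤ ω φ g y h) (hω1 : ∀ φ g y, ∑ h, ω φ g y h = 1)
    (hωdiff : ∀ g y h, Differentiable ℝ (fun φ => ω φ g y h))
    (hμ0 : ∀ h y u, 0 ≤ μ h y u) (hμ1 : ∀ h y, ∑ u, μ h y u = 1)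
    (hq0 : ∀ i u j, 0 ≤ q i u j) (hq1 : ∀ i u, ∑ j, q i u j = 1)
    -- `π φ` is the unique stationary distribution of the joint chain `P φ`
    (hπstat : ∀ φ, Matrix.vecMul (π φ)
        (Matrix.of fun (ig jh : S × G) =>
          ∑ y, ∑ u, ν ig.1 y * ω φ ig.2 y jh.2 * μ jh.2 y u * q ig.1 u jh.1) = π φ)
    (hπnonneg : ∀ φ sg, 0 ≤ π φ sg)
    (hπsum : ∀ φ, ∑ sg : S × G, π φ sg = 1)
    (hπuniq : ∀ φ (v : S × G → ℝ), Matrix.vecMul v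
        (Matrix.of fun (ig jh : S × G) =>
          ∑ y, ∑ u, ν ig.1 y * ω φ ig.2 y jh.2 * μ jh.2 y u * q ig.1 u jh.1) = v →
        (∀ sg, 0 ≤ v sg) → ∑ sg : S × G, v sg = 1 → v = π φ)
    (hπdiff : ∀ sg, Differentiable ℝ (fun φ => π φ sg))
    -- at `φ₀`, `ω` is independent of the current internal state
    (hωindep : ∀ g g' y h, ω φ₀ g y h = ω φ₀ g' y h)
    -- and `μ` is independent of the internal state
    (hμindep : ∀ h h' y u, μ h y u = μ h' y u) :
    deriv (fun φ => ∑ sg : S × G, π φ sg * r sg.1) φ₀ = 0 := by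
  classical
  -- the joint transition kernel, as a plain function
  set P : ℝ → S × G → S × G → ℝ := fun φ ig jh =>
    ∑ y, ∑ u, ν ig.1 y * ω φ ig.2 y jh.2 * μ jh.2 y u * q ig.1 u jh.1 with hPdef
  -- nonemptiness of S × G
  have hSG : Nonempty (S × G) := by
    by_contra h
    rw [not_nonempty_iff] at h
    have := hπsum φ₀
    simp at this
  obtain ⟨⟨s₀, g₀⟩⟩ := hSG
  -- the world-state marginal kernel
  set A : S → S → ℝ := fun i j => ∑ y, ∑ u, ν i y * μ g₀ y u * q i u j with hAdef
  -- stationarity in pointwise form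
  have hπstat' : ∀ φ jh, ∑ ig : S × G, π φ ig * P φ ig jh = π φ jh := by
    intro φ jh
    have := congrFun (hπstat φ) jh
    simpa [Matrix.vecMul, dotProduct, hPdef] using this
  -- row sums of P over the internal state equal A
  have hrow : ∀ φ g (i j : S), ∑ h, P φ (i, g) (j, h) = A i j := by
    intro φ g i j
    rw [Finset.sum_comm]
    refine Finset.sum_congr rfl fun y _ => ?_
    rw [Finset.sum_comm]
    refine Finset.sum_congr rfl fun u _ => ?_
    have step : ∀ h : G, ν i y * ω φ g y h * μ h y u * q i u j
        = ω φ g y h * (ν i y * μ g₀ y u * q i u j) := by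
      intro h; rw [hμindep h g₀ y u]; ring
    calc ∑ h, ν i y * ω φ g y h * μ h y u * q i u j
        = ∑ h, ω φ g y h * (ν i y * μ g₀ y u * q i u j) :=
          Finset.sum_congr rfl fun h _ => step h
      _ = (∑ h, ω φ g y h) * (ν i y * μ g₀ y u * q i u j) := by
          rw [Finset.sum_mul]
      _ = ν i y * μ g₀ y u * q i u j := by rw [hω1, one_mul]
  -- P entries are nonnegative
  have hP0 : ∀ φ ig jh, 0 ≤ P φ ig jh := by
    intro φ ig jh
    refine Finset.sum_nonneg fun y _ => Finset.sum_nonneg fun u _ => ?_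
    exact mul_nonneg (mul_nonneg (mul_nonneg (hν0 _ _) (hω0 _ _ _ _)) (hμ0 _ _ _)) (hq0 _ _ _)
  -- at φ₀, P does not depend on the current internal state
  have hPg : ∀ (g g' : G) (i : S) (jh : S × G), P φ₀ (i, g) jh = P φ₀ (i, g') jh := by
    intro g g' i jh
    refine Finset.sum_congr rfl fun y _ => Finset.sum_congr rfl fun u _ => ?_
    rw [hωindep g g' y jh.2]
  -- the marginal of π φ is stationary for A
  have hmstat : ∀ φ (j : S), ∑ i, (∑ g, π φ (i, g)) * A i j = ∑ h, π φ (j, h) := by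
    intro φ j
    calc ∑ i, (∑ g, π φ (i, g)) * A i j
        = ∑ i, ∑ g, π φ (i, g) * A i j := by
          refine Finset.sum_congr rfl fun i _ => ?_; rw [Finset.sum_mul]
      _ = ∑ ig : S × G, π φ ig * A ig.1 j := by rw [Fintype.sum_prod_type]
      _ = ∑ ig : S × G, ∑ h, π φ ig * P φ ig (j, h) := by
          refine Finset.sum_congr rfl fun ig _ => ?_
          rw [← Finset.mul_sum]
          rcases ig with ⟨i, g⟩
          rw [hrow]
      _ = ∑ h, ∑ ig : S × G, π φ ig * P φ ig (j, h) := Finset.sum_comm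
      _ = ∑ h, π φ (j, h) := Finset.sum_congr rfl fun h _ => hπstat' φ (j, h)
  -- uniqueness of the stationary distribution of A
  have hAuniq : ∀ v : S → ℝ, (∀ j, ∑ i, v i * A i j = v j) → (∀ i, 0 ≤ v i) →
      (∑ i, v i) = 1 → ∀ j, v j = ∑ h, π φ₀ (j, h) := by
    intro v hvstat hv0 hv1 j
    set V : S × G → ℝ := fun jh => ∑ i, v i * P φ₀ (i, g₀) jh with hVdef
    have hVrow : ∀ j : S, ∑ h, V (j, h) = v j := by
      intro j
      rw [Finset.sum_comm]
      calc ∑ i, ∑ h, v i * P φ₀ (i, g₀) (j, h)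
          = ∑ i, v i * A i j := by
            refine Finset.sum_congr rfl fun i _ => ?_
            rw [← Finset.mul_sum, hrow]
        _ = v j := hvstat j
    have hV0 : ∀ jh, 0 ≤ V jh :=
      fun jh => Finset.sum_nonneg fun i _ => mul_nonneg (hv0 i) (hP0 _ _ _)
    have hVsum : ∑ jh : S × G, V jh = 1 := by
      rw [Fintype.sum_prod_type]
      calc ∑ j, ∑ h, V (j, h) = ∑ j, v j :=
            Finset.sum_congr rfl fun j _ => hVrow j
        _ = 1 := hv1
    have hVstat : Matrix.vecMul V
        (Matrix.of fun (ig jh : S × G) =>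
          ∑ y, ∑ u, ν ig.1 y * ω φ₀ ig.2 y jh.2 * μ jh.2 y u * q ig.1 u jh.1) = V := by
      funext kl
      have : ∑ jh : S × G, V jh * P φ₀ jh kl = V kl := by
        calc ∑ jh : S × G, V jh * P φ₀ jh kl
            = ∑ jh : S × G, V jh * P φ₀ (jh.1, g₀) kl := by
              refine Finset.sum_congr rfl fun jh _ => ?_
              rw [hPg jh.2 g₀ jh.1 kl]
          _ = ∑ j, ∑ h, V (j, h) * P φ₀ (j, g₀) kl := by rw [Fintype.sum_prod_type]
          _ = ∑ j, v j * P φ₀ (j, g₀) kl := by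
              refine Finset.sum_congr rfl fun j _ => ?_
              rw [← Finset.sum_mul, hVrow]
          _ = V kl := rfl
      simpa [Matrix.vecMul, dotProduct, hPdef] using this
    have hVπ : V = π φ₀ := hπuniq φ₀ V hVstat hV0 hVsum
    rw [← hVrow j]
    exact Finset.sum_congr rfl fun h _ => by rw [hVπ]
  -- the marginal is constant in φ
  have hmconst : ∀ φ (j : S), ∑ g, π φ (j, g) = ∑ h, π φ₀ (j, h) := by
    intro φ j
    refine hAuniq (fun i => ∑ g, π φ (i, g)) (hmstat φ) ?_ ?_ j
    · exact fun i => Finset.sum_nonneg fun g _ => hπnonneg φ (i, g)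
    · rw [← Fintype.sum_prod_type]
      exact hπsum φ
  -- hence η is constant
  have hconst : (fun φ => ∑ sg : S × G, π φ sg * r sg.1)
      = fun _ => ∑ sg : S × G, π φ₀ sg * r sg.1 := by
    funext φ
    rw [Fintype.sum_prod_type, Fintype.sum_prod_type]
    refine Finset.sum_congr rfl fun j _ => ?_
    calc ∑ g, π φ (j, g) * r j = (∑ g, π φ (j, g)) * r j := by rw [Finset.sum_mul]
      _ = (∑ h, π φ₀ (j, h)) * r j := by rw [hmconst]
      _ = ∑ h, π φ₀ (j, h) * r j := by rw [Finset.sum_mul]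
  rw [hconst, deriv_const]
end
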